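/- (Per-episode concentration of the estimated Lipschitz constant.) Fix one episode m in which each arm i is pulled n_m(i) ≥ τ times with mutually independent Bernoulli(μ_m(i)) rewards. Then for every ε > 0, Pr[ |L_m − L̂_m| ≥ ε ] ≤ Pr[ ∃ i ∈ [K] : |μ̂_m(i) − μ_m(i)| ≥ ε·Δ_x / 2 ] ≤ 2K · exp( −Δ_x² ε² τ / 2 ). -/

import Mathlib

open Real Finset MeasureTheory ProbabilityTheory

noncomputable section

/-- The Lipschitz structure `Φ(L)` for embedding `x`. -/
def Phi {K D : ℕ} (x : Fin K → EuclideanSpace ℝ (Fin D)) (L : ℝ) : Set (Fin K → ℝ) :=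
  {μ | (∀ i, μ i ∈ Set.Icc (0:ℝ) 1) ∧ ∀ i j, |μ i - μ j| ≤ L * dist (x i) (x j)}

/-- `Δ_x`: the minimal distance between two distinct embedded arms. -/
def Δemb {K D : ℕ} (x : Fin K → EuclideanSpace ℝ (Fin D)) : ℝ :=
  sInf {r : ℝ | ∃ i j : Fin K, i ≠ j ∧ r = dist (x i) (x j)}

/-- The tightest Lipschitz constant of a mean vector `a` w.r.t. embedding `x`:
`max_{i ≠ j} |a(i) − a(j)| / d(i,j)`. -/
def lipConst {K D : ℕ} (x : Fin K → EuclideanSpace ℝ (Fin D)) (a : Fin K → ℝ) : ℝ :=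
  sSup {r : ℝ | ∃ i j : Fin K, i ≠ j ∧ r = |a i - a j| / dist (x i) (x j)}

/-- The `k`-th largest value among `f 1, …, f M`. -/
def kthLargest {M : ℕ} (f : Fin M → ℝ) (k : ℕ) : ℝ :=
  sSup {t : ℝ | k ≤ (Finset.univ.filter (fun m => t ≤ f m)).card}

/-- Empirical mean of arm `i` in episode `m`, given rewards `r` indexed by
episode/arm/pull-index. -/
def empMean {M K : ℕ} {Ω : Type*} {n : Fin M → Fin K → ℕ}
    (r : (Σ m : Fin M, Σ i : Fin K, Fin (n m i)) → Ω → ℝ) (m : Fin M) (i : Fin K)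
    (ω : Ω) : ℝ :=
  (∑ s : Fin (n m i), r ⟨m, i, s⟩ ω) / (n m i)

end

/-- Empirical mean for a single episode. -/
noncomputable def empMean1 {K : ℕ} {Ω : Type*} {n : Fin K → ℕ}
    (r : (Σ i : Fin K, Fin (n i)) → Ω → ℝ) (i : Fin K) (ω : Ω) : ℝ :=
  (∑ s : Fin (n i), r ⟨i, s⟩ ω) / (n i)


lemma bern_mgf_bound {p : ℝ} (hp0 : 0 ≤ p) (hp1 : p ≤ 1) (t : ℝ) :
    exp (-(t * p)) * (1 - p + p * exp t) ≤ exp (t ^ 2 / 8) := by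
  have hg : ∀ s : ℝ, 0 < 1 - p + p * exp s := by
    intro s
    rcases eq_or_lt_of_le hp0 with h | h
    · simp [← h]
    · nlinarith [exp_pos s]
  set g : ℝ → ℝ := fun s => 1 - p + p * exp s with hgdef
  set f : ℝ → ℝ := fun s => s ^ 2 / 8 + s * p - Real.log (g s) with hfdef
  set f' : ℝ → ℝ := fun s => s / 4 + p - p * exp s / g s with hf'def
  have hdg : ∀ s, HasDerivAt g (p * exp s) s := by
    intro s
    exact ((Real.hasDerivAt_exp s).const_mul p).const_add (1 - p)
  have hdf : ∀ s, HasDerivAt f (f' s) s := by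
    intro s
    have h1 : HasDerivAt (fun s : ℝ => s ^ 2 / 8 + s * p) (s / 4 + p) s := by
      have := ((hasDerivAt_pow 2 s).div_const 8).add ((hasDerivAt_id s).mul_const p)
      exact this.congr_deriv (by norm_num; ring)
    have h2 : HasDerivAt (fun s => Real.log (g s)) (p * exp s / g s) s :=
      (hdg s).log (hg s).ne'
    exact h1.sub h2
  have hdf' : ∀ s, HasDerivAt f' (1 / 4 - (p * exp s * g s - p * exp s * (p * exp s)) / (g s) ^ 2) s := by
    intro s
    have h1 : HasDerivAt (fun s : ℝ => s / 4 + p) (1 / 4) s := by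
      simpa using ((hasDerivAt_id s).div_const 4).add_const p
    have h2 : HasDerivAt (fun s => p * exp s / g s)
        ((p * exp s * g s - p * exp s * (p * exp s)) / (g s) ^ 2) s :=
      (((Real.hasDerivAt_exp s).const_mul p)).div (hdg s) (hg s).ne'
    exact h1.sub h2
  have hf''nonneg : ∀ s, 0 ≤ 1 / 4 - (p * exp s * g s - p * exp s * (p * exp s)) / (g s) ^ 2 := by
    intro s
    have hgs := hg s
    rw [sub_nonneg, div_le_iff₀ (by positivity)]
    have hu : 0 ≤ p * exp s := by positivity
    have : g s = p * exp s + (1 - p) := by simp [hgdef]; ring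
    nlinarith [sq_nonneg (p * exp s - (1 - p)), sub_nonneg.mpr hp1]
  have hmono' : Monotone f' := by
    apply monotone_of_deriv_nonneg
    · exact fun s => (hdf' s).differentiableAt
    · intro s; rw [(hdf' s).deriv]; exact hf''nonneg s
  have hf'0 : f' 0 = 0 := by
    simp [hf'def, hgdef]
  have hdiff : Differentiable ℝ f := fun s => (hdf s).differentiableAt
  have hfnonneg : ∀ s, 0 ≤ f s := by
    have hf0 : f 0 = 0 := by simp [hfdef, hgdef]
    intro s
    rcases le_total 0 s with h | h
    · have hmono : MonotoneOn f (Set.Ici 0) := by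
        apply monotoneOn_of_deriv_nonneg (convex_Ici 0) hdiff.continuous.continuousOn
          hdiff.differentiableOn
        intro u hu
        rw [(hdf u).deriv]
        rw [interior_Ici] at hu
        calc (0:ℝ) = f' 0 := hf'0.symm
          _ ≤ f' u := hmono' (le_of_lt hu)
      have := hmono Set.self_mem_Ici (Set.mem_Ici.mpr h) h
      linarith [hf0 ▸ this]
    · have hanti : AntitoneOn f (Set.Iic 0) := by
        apply antitoneOn_of_deriv_nonpos (convex_Iic 0) hdiff.continuous.continuousOn
          hdiff.differentiableOn
        intro u hu
        rw [(hdf u).deriv]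
        rw [interior_Iic] at hu
        calc f' u ≤ f' 0 := hmono' (le_of_lt hu)
          _ = 0 := hf'0
      have := hanti (Set.mem_Iic.mpr h) Set.self_mem_Iic h
      linarith [hf0 ▸ this]
  have hft := hfnonneg t
  have hlog : Real.log (g t) ≤ t ^ 2 / 8 + t * p := by
    simp only [hfdef] at hft; linarith
  have hgt := hg t
  have hkey : (1 : ℝ) - p + p * exp t ≤ exp (t ^ 2 / 8 + t * p) :=
    (Real.log_le_iff_le_exp hgt).mp hlog
  calc exp (-(t*p)) * (1 - p + p * exp t) ≤ exp (-(t*p)) * exp (t^2/8 + t*p) := by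
        exact mul_le_mul_of_nonneg_left hkey (exp_pos _).le
    _ = exp (t^2/8) := by rw [← exp_add]; ring_nf


lemma mgf_bernoulli_centered {Ω : Type*} [MeasurableSpace Ω] (P : Measure Ω)
    [IsProbabilityMeasure P] {X : Ω → ℝ} (hX : Measurable X)
    (h01 : ∀ ω, X ω = 0 ∨ X ω = 1) {p : ℝ} (hp0 : 0 ≤ p)
    (hP : P {ω | X ω = 1} = ENNReal.ofReal p) (t : ℝ) :
    mgf (fun ω => X ω - p) P t = exp (-(t * p)) * (1 - p + p * exp t) := by
  have hXint : Integrable X P := by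
    refine Integrable.mono' (integrable_const 1) hX.aestronglyMeasurable ?_
    filter_upwards with ω
    rcases h01 ω with h | h <;> simp [h]
  have hXeq : X = Set.indicator (X ⁻¹' {1}) (fun _ => (1:ℝ)) := by
    funext ω
    rcases h01 ω with h | h <;> simp [Set.indicator_apply, h]
  have hiX : ∫ ω, X ω ∂P = p := by
    rw [show (fun ω => X ω) = X from rfl, hXeq,
      integral_indicator_const (1:ℝ) (hX (measurableSet_singleton 1))]
    have : X ⁻¹' {1} = {ω | X ω = 1} := rfl
    rw [this, measureReal_def, hP, ENNReal.toReal_ofReal hp0, smul_eq_mul, mul_one]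
  have hpt : ∀ ω, exp (t * (X ω - p)) = exp (-(t*p)) * (1 + (exp t - 1) * X ω) := by
    intro ω
    rcases h01 ω with h | h
    · simp [h]
    · rw [h]
      have he : t * (1 - p) = -(t * p) + t := by ring
      rw [he, exp_add]
      ring
  rw [mgf]
  calc ∫ ω, exp (t * (X ω - p)) ∂P
      = ∫ ω, exp (-(t*p)) * (1 + (exp t - 1) * X ω) ∂P := by
        exact integral_congr_ae (Filter.Eventually.of_forall hpt)
    _ = exp (-(t*p)) * ∫ ω, (1 + (exp t - 1) * X ω) ∂P := integral_const_mul _ _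
    _ = exp (-(t*p)) * (1 + (exp t - 1) * p) := by
        rw [integral_add (integrable_const 1) (hXint.const_mul _), integral_const,
          integral_const_mul, hiX]
        simp
    _ = exp (-(t*p)) * (1 - p + p * exp t) := by ring

lemma chernoff_of_mgf {Ω : Type*} [MeasurableSpace Ω] (P : Measure Ω)
    [IsProbabilityMeasure P] {Z : Ω → ℝ} {N c : ℝ} (hc : 0 ≤ c)
    (hint : Integrable (fun ω => exp ((4 * c) * Z ω)) P)
    (hmgf : mgf Z P (4 * c) ≤ exp (N * (4 * c) ^ 2 / 8)) :
    (P {ω | N * c ≤ Z ω}).toReal ≤ exp (-2 * N * c ^ 2) := by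
  have h := measure_ge_le_exp_mul_mgf (μ := P) (X := Z) (N * c) (by positivity) hint
  calc (P {ω | N * c ≤ Z ω}).toReal
      ≤ exp (-(4 * c) * (N * c)) * mgf Z P (4 * c) := h
    _ ≤ exp (-(4 * c) * (N * c)) * exp (N * (4 * c) ^ 2 / 8) :=
        mul_le_mul_of_nonneg_left hmgf (exp_pos _).le
    _ = exp (-2 * N * c ^ 2) := by rw [← exp_add]; ring_nf

lemma sigma_filter_sum {K : ℕ} {n : Fin K → ℕ} (i : Fin K)
    (F : (Σ j : Fin K, Fin (n j)) → ℝ) :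
    ∑ idx ∈ Finset.univ.filter (fun idx : Σ j : Fin K, Fin (n j) => idx.1 = i), F idx
      = ∑ s : Fin (n i), F ⟨i, s⟩ := by
  rw [Finset.sum_filter, ← Finset.univ_sigma_univ, Finset.sum_sigma]
  rw [Finset.sum_eq_single i]
  · simp
  · intro j _ hj
    simp [hj]
  · simp

section Geom
variable {K D : ℕ} (x : Fin K → EuclideanSpace ℝ (Fin D))

lemma distSet_finite : {r : ℝ | ∃ i j : Fin K, i ≠ j ∧ r = dist (x i) (x j)}.Finite := by
  apply Set.Finite.subset (Set.finite_range (fun p : Fin K × Fin K => dist (x p.1) (x p.2)))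
  rintro r ⟨i, j, -, rfl⟩
  exact ⟨(i, j), rfl⟩

lemma lipSet_finite (a : Fin K → ℝ) :
    {r : ℝ | ∃ i j : Fin K, i ≠ j ∧ r = |a i - a j| / dist (x i) (x j)}.Finite := by
  apply Set.Finite.subset
    (Set.finite_range (fun p : Fin K × Fin K => |a p.1 - a p.2| / dist (x p.1) (x p.2)))
  rintro r ⟨i, j, -, rfl⟩
  exact ⟨(i, j), rfl⟩

variable (hK : 2 ≤ K)
include hK

lemma exists_ne_pair : (⟨0, by omega⟩ : Fin K) ≠ (⟨1, by omega⟩ : Fin K) := by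
  simp [Fin.ext_iff]

lemma distSet_nonempty : {r : ℝ | ∃ i j : Fin K, i ≠ j ∧ r = dist (x i) (x j)}.Nonempty :=
  ⟨_, ⟨0, by omega⟩, ⟨1, by omega⟩, exists_ne_pair hK, rfl⟩

lemma lipSet_nonempty (a : Fin K → ℝ) :
    {r : ℝ | ∃ i j : Fin K, i ≠ j ∧ r = |a i - a j| / dist (x i) (x j)}.Nonempty :=
  ⟨_, ⟨0, by omega⟩, ⟨1, by omega⟩, exists_ne_pair hK, rfl⟩

variable (hx : Function.Injective x)
include hx

lemma Δemb_pos : 0 < Δemb x := by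
  obtain ⟨i, j, hij, hr⟩ := (distSet_nonempty x hK).csInf_mem (distSet_finite x)
  rw [Δemb, hr]
  exact dist_pos.mpr (fun h => hij (hx h))

omit hx

omit hK in
lemma Δemb_le {i j : Fin K} (hij : i ≠ j) : Δemb x ≤ dist (x i) (x j) :=
  csInf_le (distSet_finite x).bddBelow ⟨i, j, hij, rfl⟩

include hx

lemma lipConst_abs_sub_lt (a b : Fin K → ℝ) {c : ℝ} (hc : 0 < c)
    (h : ∀ i, |a i - b i| < c * Δemb x / 2) : |lipConst x a - lipConst x b| < c := by
  have hΔpos := Δemb_pos x hK hx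
  have hne : Finset.univ.Nonempty := ⟨(⟨0, by omega⟩ : Fin K), Finset.mem_univ _⟩
  set δ : ℝ := Finset.univ.sup' hne (fun i => |a i - b i|) with hδdef
  have hδ0 : 0 ≤ δ := by
    obtain ⟨i0, -⟩ := hne
    exact le_trans (abs_nonneg (a i0 - b i0))
      (Finset.le_sup' (fun i => |a i - b i|) (Finset.mem_univ i0))
  have hδlt : δ < c * Δemb x / 2 := (Finset.sup'_lt_iff hne).mpr (fun i _ => h i)
  have key : ∀ u v : Fin K → ℝ, (∀ i, |u i - v i| ≤ δ) →
      lipConst x u ≤ lipConst x v + 2 * δ / Δemb x := by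
    intro u v huv
    apply csSup_le (lipSet_nonempty x hK u)
    rintro r ⟨i, j, hij, rfl⟩
    have hd : Δemb x ≤ dist (x i) (x j) := Δemb_le x hij
    have hdpos : 0 < dist (x i) (x j) := lt_of_lt_of_le hΔpos hd
    have h1 : |u i - u j| ≤ |v i - v j| + 2 * δ := by
      have hi := huv i
      have hj := huv j
      have : |u i - u j| ≤ |v i - v j| + (|u i - v i| + |u j - v j|) := by
        have := abs_add_le (v i - v j + (u i - v i)) (-(u j - v j))
        have h2 := abs_add_le (v i - v j) (u i - v i)
        rw [abs_neg] at this
        calc |u i - u j| = |v i - v j + (u i - v i) + -(u j - v j)| := by ring_nf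
          _ ≤ |v i - v j + (u i - v i)| + |u j - v j| := this
          _ ≤ |v i - v j| + |u i - v i| + |u j - v j| := by linarith
          _ = |v i - v j| + (|u i - v i| + |u j - v j|) := by ring
      linarith
    calc |u i - u j| / dist (x i) (x j)
        ≤ (|v i - v j| + 2 * δ) / dist (x i) (x j) := by gcongr
      _ = |v i - v j| / dist (x i) (x j) + 2 * δ / dist (x i) (x j) := add_div _ _ _
      _ ≤ lipConst x v + 2 * δ / Δemb x := by
          gcongr
          exact le_csSup (lipSet_finite x v).bddAbove ⟨i, j, hij, rfl⟩
  have h1 := key a b (fun i => Finset.le_sup' (fun i => |a i - b i|) (Finset.mem_univ i))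
  have h2 := key b a (fun i => by
    rw [abs_sub_comm]
    exact Finset.le_sup' (fun i => |a i - b i|) (Finset.mem_univ i))
  have h3 : 2 * δ / Δemb x < c := by
    rw [div_lt_iff₀ hΔpos]
    nlinarith
  rw [abs_sub_lt_iff]
  constructor <;> linarith
end Geom

theorem stmt7 {K D : ℕ} (hK : 2 ≤ K)
    (x : Fin K → EuclideanSpace ℝ (Fin D))
    (hx : Function.Injective x)
    (hcube : ∀ i t, x i t ∈ Set.Icc (0:ℝ) 1)
    (μm : Fin K → ℝ) (hμm : ∀ i, μm i ∈ Set.Icc (0:ℝ) 1)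
    (τ : ℝ) (hτ0 : 0 < τ)
    (n : Fin K → ℕ) (hn : ∀ i, τ ≤ (n i : ℝ))
    {Ω : Type*} [MeasurableSpace Ω] (P : Measure Ω) [IsProbabilityMeasure P]
    (r : (Σ i : Fin K, Fin (n i)) → Ω → ℝ)
    (hmeas : ∀ idx, Measurable (r idx))
    (h01 : ∀ idx ω, r idx ω = 0 ∨ r idx ω = 1)
    (hmean : ∀ idx, P {ω | r idx ω = 1} = ENNReal.ofReal (μm idx.1))
    (hindep : ProbabilityTheory.iIndepFun r P)
    (ε : ℝ) (hε : 0 < ε) :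
    (P {ω | ε ≤ |lipConst x μm - lipConst x (fun i => empMean1 r i ω)|}).toReal
      ≤ (P {ω | ∃ i, ε * Δemb x / 2 ≤ |empMean1 r i ω - μm i|}).toReal
    ∧ (P {ω | ∃ i, ε * Δemb x / 2 ≤ |empMean1 r i ω - μm i|}).toReal
      ≤ 2 * K * Real.exp (-(Δemb x) ^ 2 * ε ^ 2 * τ / 2) := by
  classical
  have hΔpos : 0 < Δemb x := Δemb_pos x hK hx
  set c : ℝ := ε * Δemb x / 2 with hcdef
  have hcpos : 0 < c := by positivity
  constructor
  · -- Part 1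
    apply ENNReal.toReal_mono (measure_ne_top P _)
    apply measure_mono
    intro ω hω
    simp only [Set.mem_setOf_eq] at hω ⊢
    by_contra hcon
    push_neg at hcon
    have := lipConst_abs_sub_lt x hK hx μm (fun i => empMean1 r i ω) hε
      (fun i => by rw [abs_sub_comm]; exact hcon i)
    linarith
  · -- Part 2
    -- centered variables
    set Y : (Σ j : Fin K, Fin (n j)) → Ω → ℝ := fun idx ω => r idx ω - μm idx.1 with hYdef
    have hYmeas : ∀ idx, Measurable (Y idx) := fun idx => (hmeas idx).sub measurable_const
    have hYindep : iIndepFun Y P :=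
      hindep.comp (fun idx => fun y => y - μm idx.1)
        (fun idx => measurable_id.sub measurable_const)
    have hYbd : ∀ idx ω, |Y idx ω| ≤ 1 := by
      intro idx ω
      have h1 := (hμm idx.1).1
      have h2 := (hμm idx.1).2
      rcases h01 idx ω with h | h <;> rw [abs_le] <;> constructor <;>
        simp only [hYdef, h] <;> linarith
    have hYint : ∀ (t : ℝ) idx, Integrable (fun ω => exp (t * Y idx ω)) P := by
      intro t idx
      refine Integrable.mono' (integrable_const (exp |t|))
        (((hYmeas idx).const_mul t).exp.aestronglyMeasurable) ?_
      filter_upwards with ω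
      rw [Real.norm_eq_abs, abs_of_pos (exp_pos _), exp_le_exp]
      calc t * Y idx ω ≤ |t * Y idx ω| := le_abs_self _
        _ = |t| * |Y idx ω| := abs_mul _ _
        _ ≤ |t| * 1 := mul_le_mul_of_nonneg_left (hYbd idx ω) (abs_nonneg t)
        _ = |t| := mul_one _
    have hYmgf : ∀ idx (t : ℝ), mgf (Y idx) P t ≤ exp (t ^ 2 / 8) := by
      intro idx t
      have := mgf_bernoulli_centered P (hmeas idx) (h01 idx) (hμm idx.1).1 (hmean idx) t
      rw [hYdef, this]
      exact bern_mgf_bound (hμm idx.1).1 (hμm idx.1).2 t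
    -- per-arm bound
    have harm : ∀ i : Fin K,
        (P {ω | c ≤ |empMean1 r i ω - μm i|}).toReal
          ≤ 2 * exp (-(Δemb x) ^ 2 * ε ^ 2 * τ / 2) := by
      intro i
      set N : ℕ := n i with hNdef
      have hNpos : 0 < (N : ℝ) := lt_of_lt_of_le hτ0 (hn i)
      set si : Finset (Σ j : Fin K, Fin (n j)) :=
        Finset.univ.filter (fun idx => idx.1 = i) with hsidef
      set Z : Ω → ℝ := ∑ idx ∈ si, Y idx with hZdef
      have hZω : ∀ ω, Z ω = (∑ s : Fin (n i), r ⟨i, s⟩ ω) - N * μm i := by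
        intro ω
        rw [hZdef, Finset.sum_apply]
        rw [hsidef, sigma_filter_sum i (fun idx => Y idx ω)]
        simp only [hYdef]
        rw [Finset.sum_sub_distrib, Finset.sum_const, Finset.card_univ, Fintype.card_fin,
          nsmul_eq_mul]
      have hcard : (si.card : ℝ) = N := by
        have := sigma_filter_sum (n := n) i (fun _ => (1:ℝ))
        simpa [hsidef] using this
      have hZmgf : ∀ t : ℝ, mgf Z P t ≤ exp ((N : ℝ) * t ^ 2 / 8) := by
        intro t
        rw [hZdef, hYindep.mgf_sum hYmeas si]
        calc ∏ idx ∈ si, mgf (Y idx) P t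
            ≤ ∏ idx ∈ si, exp (t ^ 2 / 8) :=
              Finset.prod_le_prod (fun _ _ => mgf_nonneg) (fun idx _ => hYmgf idx t)
          _ = exp (t ^ 2 / 8) ^ si.card := Finset.prod_const _
          _ = exp ((si.card : ℝ) * (t ^ 2 / 8)) := by rw [← Real.exp_nat_mul]
          _ = exp ((N : ℝ) * t ^ 2 / 8) := by rw [hcard]; ring_nf
      have hZint : ∀ t : ℝ, Integrable (fun ω => exp (t * Z ω)) P := by
        intro t
        rw [hZdef]
        exact hYindep.integrable_exp_mul_sum hYmeas (fun idx _ => hYint t idx)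
      have hup : (P {ω | (N : ℝ) * c ≤ Z ω}).toReal ≤ exp (-2 * (N : ℝ) * c ^ 2) :=
        chernoff_of_mgf P hcpos.le (hZint (4 * c)) (hZmgf (4 * c))
      have hlo : (P {ω | (N : ℝ) * c ≤ (-Z) ω}).toReal ≤ exp (-2 * (N : ℝ) * c ^ 2) := by
        apply chernoff_of_mgf P hcpos.le
        · have := hZint (-(4 * c))
          refine this.congr ?_
          filter_upwards with ω
          simp [neg_mul, mul_neg]
        · rw [mgf_neg]
          calc mgf Z P (-(4 * c)) ≤ exp ((N : ℝ) * (-(4 * c)) ^ 2 / 8) := hZmgf _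
            _ = exp ((N : ℝ) * (4 * c) ^ 2 / 8) := by ring_nf
      have hsub : {ω | c ≤ |empMean1 r i ω - μm i|}
          ⊆ {ω | (N : ℝ) * c ≤ Z ω} ∪ {ω | (N : ℝ) * c ≤ (-Z) ω} := by
        intro ω hω
        simp only [Set.mem_setOf_eq] at hω
        have hemp : empMean1 r i ω - μm i = Z ω / N := by
          rw [hZω ω, empMean1]
          have hn0 : (n i : ℝ) ≠ 0 := hNpos.ne'
          rw [hNdef]
          field_simp
        rw [hemp, abs_div, abs_of_pos hNpos, le_div_iff₀ hNpos] at hω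
        rw [mul_comm] at hω
        rcases le_abs.mp hω with h | h
        · exact Or.inl h
        · right
          simp only [Set.mem_setOf_eq, Pi.neg_apply]
          linarith
      have hexp : exp (-2 * (N : ℝ) * c ^ 2) ≤ exp (-(Δemb x) ^ 2 * ε ^ 2 * τ / 2) := by
        rw [exp_le_exp, hcdef]
        have hτN := hn i
        nlinarith [sq_nonneg (ε * Δemb x), hΔpos, hε]
      calc (P {ω | c ≤ |empMean1 r i ω - μm i|}).toReal
          ≤ (P ({ω | (N : ℝ) * c ≤ Z ω} ∪ {ω | (N : ℝ) * c ≤ (-Z) ω})).toReal :=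
            ENNReal.toReal_mono (measure_ne_top P _) (measure_mono hsub)
        _ ≤ ((P {ω | (N : ℝ) * c ≤ Z ω}) + (P {ω | (N : ℝ) * c ≤ (-Z) ω})).toReal :=
            ENNReal.toReal_mono (by finiteness) (measure_union_le _ _)
        _ = (P {ω | (N : ℝ) * c ≤ Z ω}).toReal + (P {ω | (N : ℝ) * c ≤ (-Z) ω}).toReal :=
            ENNReal.toReal_add (measure_ne_top P _) (measure_ne_top P _)
        _ ≤ exp (-2 * (N : ℝ) * c ^ 2) + exp (-2 * (N : ℝ) * c ^ 2) := add_le_add hup hlo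
        _ = 2 * exp (-2 * (N : ℝ) * c ^ 2) := by ring
        _ ≤ 2 * exp (-(Δemb x) ^ 2 * ε ^ 2 * τ / 2) := by linarith
    -- union bound
    have hUeq : {ω | ∃ i, ε * Δemb x / 2 ≤ |empMean1 r i ω - μm i|}
        = ⋃ i : Fin K, {ω | c ≤ |empMean1 r i ω - μm i|} := by
      rw [hcdef]
      exact Set.setOf_exists _
    rw [hUeq]
    calc (P (⋃ i : Fin K, {ω | c ≤ |empMean1 r i ω - μm i|})).toReal
        ≤ (∑ i : Fin K, P {ω | c ≤ |empMean1 r i ω - μm i|}).toReal :=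
          ENNReal.toReal_mono (ENNReal.sum_ne_top.mpr (fun i _ => measure_ne_top P _))
            (measure_iUnion_fintype_le _ _)
      _ = ∑ i : Fin K, (P {ω | c ≤ |empMean1 r i ω - μm i|}).toReal :=
          ENNReal.toReal_sum (fun i _ => measure_ne_top P _)
      _ ≤ ∑ i : Fin K, 2 * exp (-(Δemb x) ^ 2 * ε ^ 2 * τ / 2) :=
          Finset.sum_le_sum (fun i _ => harm i)
      _ = 2 * K * exp (-(Δemb x) ^ 2 * ε ^ 2 * τ / 2) := by
          rw [Finset.sum_const, Finset.card_univ, Fintype.card_fin, nsmul_eq_mul]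
          ring
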